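/- (Rado's Theorem.) Let M be a matroid of rank n on a ground set E, and let S_1, ..., S_n be sets of elements of M. Then there exists a basis of M of the form {e_1, ..., e_n} with e_i ∈ S_i for each i and the e_i pairwise distinct (a transversal basis of (S_1, ..., S_n)) if and only if for every subset X ⊆ {1, ..., n} one has r(∪_{i ∈ X} S_i) ≥ |X|, where r is the rank function of M. -/

import Mathlib

/-- The rank of a set `X` in a matroid `M` : the supremum of the cardinalities of
independent subsets of `X` (as an extended natural number). -/
noncomputable def Matroid.rankFn {α : Type*} (M : Matroid α) (X : Set α) : ℕ∞ :=
  sSup (Set.encard '' {I | M.Indep I ∧ I ⊆ X})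

namespace RadoAux

open Set Matroid

variable {α : Type*} {M : Matroid α}

lemma le_rankFn (I X : Set α) (hI : M.Indep I) (hIX : I ⊆ X) : I.encard ≤ M.rankFn X :=
  le_sSup ⟨I, ⟨hI, hIX⟩, rfl⟩

lemma rankFn_eq {I X : Set α} (hI : M.IsBasis' I X) : M.rankFn X = I.encard := by
  refine le_antisymm (sSup_le ?_) (le_rankFn _ _ hI.indep hI.subset)
  rintro _ ⟨J, ⟨hJ, hJX⟩, rfl⟩
  obtain ⟨J', hJ', hJJ'⟩ := hJ.subset_isBasis'_of_subset hJX
  exact (Set.encard_mono hJJ').trans (hJ'.encard_eq_encard hI).le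

lemma rankFn_le_encard (X : Set α) : M.rankFn X ≤ X.encard := by
  refine sSup_le ?_
  rintro _ ⟨J, ⟨_, hJX⟩, rfl⟩
  exact Set.encard_mono hJX

lemma rankFn_mono {X Y : Set α} (h : X ⊆ Y) : M.rankFn X ≤ M.rankFn Y :=
  sSup_le (by rintro _ ⟨J, ⟨hJ, hJX⟩, rfl⟩; exact le_rankFn _ _ hJ (hJX.trans h))

lemma exists_indep_of_le_rankFn {k : ℕ∞} {X : Set α} (h : k ≤ M.rankFn X) :
    ∃ I, M.Indep I ∧ I ⊆ X ∧ I.encard = k := by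
  obtain ⟨J, hJ⟩ := M.exists_isBasis' X
  rw [rankFn_eq hJ] at h
  obtain ⟨I, hIJ, hIk⟩ := Set.exists_subset_encard_eq h
  exact ⟨I, hJ.indep.subset hIJ, hIJ.trans hJ.subset, hIk⟩

lemma rankFn_submod (A B : Set α) :
    M.rankFn (A ∪ B) + M.rankFn (A ∩ B) ≤ M.rankFn A + M.rankFn B := by
  obtain ⟨I, hI⟩ := M.exists_isBasis' (A ∩ B)
  obtain ⟨J, hJ, hIJ⟩ :=
    hI.indep.subset_isBasis'_of_subset (hI.subset.trans (Set.inter_subset_left.trans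
      Set.subset_union_left))
  rw [rankFn_eq hJ, rankFn_eq hI]
  have h1 : (J ∩ A).encard ≤ M.rankFn A :=
    le_rankFn _ _ (hJ.indep.subset Set.inter_subset_left) Set.inter_subset_right
  have h2 : (J ∩ B).encard ≤ M.rankFn B :=
    le_rankFn _ _ (hJ.indep.subset Set.inter_subset_left) Set.inter_subset_right
  have hu : (J ∩ A) ∪ (J ∩ B) = J := by
    rw [← Set.inter_union_distrib_left]
    exact Set.inter_eq_self_of_subset_left hJ.subset
  have hi : I ⊆ (J ∩ A) ∩ (J ∩ B) := by
    intro a ha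
    exact ⟨⟨hIJ ha, (hI.subset ha).1⟩, hIJ ha, (hI.subset ha).2⟩
  have key : J.encard + I.encard ≤ (J ∩ A).encard + (J ∩ B).encard := by
    rw [← Set.encard_union_add_encard_inter (J ∩ A) (J ∩ B), hu]
    exact add_le_add_right (Set.encard_mono hi) _
  exact key.trans (add_le_add h1 h2)

/-- The case of Rado's theorem where all the sets are (at most) singletons. -/
lemma rado_single (n : ℕ) (M : Matroid α) (hrank : M.rankFn M.E = (n : ℕ∞))
    (S : Fin n → Finset α) (hcard : ∀ i, (S i).card ≤ 1)
    (hcond : ∀ X : Finset (Fin n), (X.card : ℕ∞) ≤ M.rankFn (⋃ i ∈ X, (S i : Set α))) :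
    ∃ e : Fin n → α, Function.Injective e ∧ (∀ i, e i ∈ (S i : Set α)) ∧
      M.IsBase (Set.range e) := by
  have hne : ∀ i, ∃ a, a ∈ S i := by
    intro i
    by_contra h
    push_neg at h
    have hempty : S i = ∅ := Finset.eq_empty_of_forall_notMem h
    have h1 := hcond {i}
    simp only [Finset.mem_singleton, Set.iUnion_iUnion_eq_left, Finset.card_singleton,
      hempty, Finset.coe_empty, Nat.cast_one] at h1
    have h2 := rankFn_le_encard (M := M) (∅ : Set α)
    rw [Set.encard_empty] at h2
    have := h1.trans h2
    simp at this
  choose e he using hne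
  have huniq : ∀ i a, a ∈ S i → a = e i := fun i a ha =>
    Finset.card_le_one.mp (hcard i) a ha (e i) (he i)
  have hinj : Function.Injective e := by
    intro i j hij
    by_contra hne'
    have hc : ({i, j} : Finset (Fin n)).card = 2 := Finset.card_pair hne'
    have hU : ⋃ k ∈ ({i, j} : Finset (Fin n)), (S k : Set α) ⊆ {e i} := by
      intro a ha
      simp only [Finset.mem_insert, Finset.mem_singleton, Set.mem_iUnion, Finset.mem_coe,
        exists_prop] at ha
      obtain ⟨k, hk | hk, hak⟩ := ha
      · have hae : a = e i := huniq i a (hk ▸ hak)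
        simp [hae]
      · have hae : a = e j := huniq j a (hk ▸ hak)
        simp [hae, ← hij]
    have h2 := (hcond {i, j}).trans ((rankFn_le_encard _).trans (Set.encard_mono hU))
    rw [hc, Set.encard_singleton] at h2
    norm_num at h2
  have hrangeE : ⋃ i ∈ (Finset.univ : Finset (Fin n)), (S i : Set α) = Set.range e := by
    ext a
    simp only [Finset.mem_univ, Set.iUnion_true, Set.mem_iUnion, Finset.mem_coe,
      Set.mem_range]
    constructor
    · rintro ⟨i, hi⟩; exact ⟨i, (huniq i a hi).symm⟩
    · rintro ⟨i, rfl⟩; exact ⟨i, he i⟩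
  have hn : (n : ℕ∞) ≤ M.rankFn (Set.range e) := by
    have := hcond Finset.univ
    rwa [hrangeE, Finset.card_univ, Fintype.card_fin] at this
  obtain ⟨I, hI, hIsub, hIcard⟩ := exists_indep_of_le_rankFn hn
  have hre : (Set.range e).encard ≤ (n : ℕ∞) := by
    calc (Set.range e).encard = (e '' Set.univ).encard := by rw [Set.image_univ]
    _ ≤ (Set.univ : Set (Fin n)).encard := Set.encard_image_le _ _
    _ = (n : ℕ∞) := by simp [Set.encard_univ]
  have hIeq : I = Set.range e :=
    (Set.finite_range e).eq_of_subset_of_encard_le' hIsub (hre.trans hIcard.symm.le)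
  have hIndep : M.Indep (Set.range e) := hIeq ▸ hI
  obtain ⟨B, hB, hsub⟩ := hIndep.exists_isBase_superset
  have hBcard : B.encard = (n : ℕ∞) := (rankFn_eq hB.isBasis_ground.isBasis').symm.trans hrank
  have hBfin : B.Finite := Set.finite_of_encard_eq_coe hBcard
  have hrec : (Set.range e).encard = (n : ℕ∞) := by rw [← hIeq, hIcard]
  have hBeq : Set.range e = B :=
    hBfin.eq_of_subset_of_encard_le' hsub (hBcard.trans hrec.symm).le
  exact ⟨e, hinj, fun i => he i, hBeq ▸ hB⟩

/-- Rado's theorem for finite sets, by induction on the total size of the sets. -/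
lemma rado_finset (n : ℕ) (M : Matroid α) (hrank : M.rankFn M.E = (n : ℕ∞)) :
    ∀ N : ℕ, ∀ S : Fin n → Finset α, (∑ i, (S i).card) ≤ N →
    (∀ X : Finset (Fin n), (X.card : ℕ∞) ≤ M.rankFn (⋃ i ∈ X, (S i : Set α))) →
    ∃ e : Fin n → α, Function.Injective e ∧ (∀ i, e i ∈ (S i : Set α)) ∧
      M.IsBase (Set.range e) := by
  classical
  intro N
  induction N with
  | zero =>
    intro S hsum hcond
    refine rado_single n M hrank S (fun i => ?_) hcond
    have h1 : (S i).card ≤ ∑ j, (S j).card :=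
      Finset.single_le_sum (f := fun j => (S j).card) (fun _ _ => Nat.zero_le _)
        (Finset.mem_univ i)
    omega
  | succ N IH =>
    intro S hsum hcond
    by_cases hall : ∀ i, (S i).card ≤ 1
    · exact rado_single n M hrank S hall hcond
    push_neg at hall
    obtain ⟨i, hi⟩ := hall
    have hi2 : 1 < (S i).card := hi
    obtain ⟨x, hx, y, hy, hxy⟩ := Finset.one_lt_card.mp hi2
    -- the two candidate reduced families
    set S₁ := Function.update S i ((S i).erase x) with hS₁def
    set S₂ := Function.update S i ((S i).erase y) with hS₂def
    -- helper to analyze a failure of the condition for an update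
    have hfail : ∀ (z : α), z ∈ S i → ∀ (S' : Fin n → Finset α),
        S' = Function.update S i ((S i).erase z) →
        ¬ (∀ X : Finset (Fin n), (X.card : ℕ∞) ≤ M.rankFn (⋃ j ∈ X, (S' j : Set α))) →
        ∃ X₀ : Finset (Fin n), i ∉ X₀ ∧
          M.rankFn (((S i).erase z : Set α) ∪ ⋃ j ∈ X₀, (S j : Set α)) ≤ (X₀.card : ℕ∞) := by
      intro z hz S' hS' hne
      push_neg at hne
      obtain ⟨X, hX⟩ := hne
      have hiX : i ∈ X := by
        by_contra hiX
        have heq : ⋃ j ∈ X, (S' j : Set α) = ⋃ j ∈ X, (S j : Set α) :=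
          Set.iUnion₂_congr fun j hj => by
            rw [hS', Function.update_of_ne (ne_of_mem_of_not_mem hj hiX)]
        rw [heq] at hX
        exact hX.not_ge (hcond X)
      refine ⟨X.erase i, Finset.notMem_erase i X, ?_⟩
      have hXi : X = insert i (X.erase i) := (Finset.insert_erase hiX).symm
      have hA : ⋃ j ∈ X, (S' j : Set α) =
          ((S i).erase z : Set α) ∪ ⋃ j ∈ X.erase i, (S j : Set α) := by
        conv_lhs => rw [hXi]
        rw [Finset.set_biUnion_insert]
        congr 1
        · rw [hS', Function.update_self]
        · exact Set.iUnion₂_congr fun j hj => by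
            rw [hS', Function.update_of_ne (Finset.ne_of_mem_erase hj)]
      rw [hA] at hX
      have hcX : X.card = (X.erase i).card + 1 := by
        rw [hXi, Finset.card_insert_of_notMem (Finset.notMem_erase i X),
          Finset.erase_insert (Finset.notMem_erase i X)]
      rw [hcX, Nat.cast_add, Nat.cast_one] at hX
      exact (ENat.lt_add_one_iff (by simp)).mp hX
    -- the key claim: the condition holds for S₁ or S₂
    have hkey : (∀ X : Finset (Fin n), (X.card : ℕ∞) ≤ M.rankFn (⋃ j ∈ X, (S₁ j : Set α))) ∨
        (∀ X : Finset (Fin n), (X.card : ℕ∞) ≤ M.rankFn (⋃ j ∈ X, (S₂ j : Set α))) := by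
      by_contra hcon
      rw [not_or] at hcon
      obtain ⟨h₁, h₂⟩ := hcon
      obtain ⟨X₀, hiX₀, hX₀⟩ := hfail x hx S₁ hS₁def h₁
      obtain ⟨Y₀, hiY₀, hY₀⟩ := hfail y hy S₂ hS₂def h₂
      set A : Set α := ((S i).erase x : Set α) ∪ ⋃ j ∈ X₀, (S j : Set α) with hAdef
      set B : Set α := ((S i).erase y : Set α) ∪ ⋃ j ∈ Y₀, (S j : Set α) with hBdef
      -- lower bound for rank of A ∪ B
      have hsub1 : ⋃ j ∈ insert i (X₀ ∪ Y₀), (S j : Set α) ⊆ A ∪ B := by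
        rw [Finset.set_biUnion_insert]
        rintro a (ha | ha)
        · rcases eq_or_ne a x with rfl | hax
          · right; left
            simp only [Finset.coe_erase, Set.mem_diff, Set.mem_singleton_iff]
            exact ⟨ha, fun h => hxy (h ▸ rfl)⟩
          · left; left
            simp only [Finset.coe_erase, Set.mem_diff, Set.mem_singleton_iff]
            exact ⟨ha, hax⟩
        · simp only [Set.mem_iUnion, Finset.mem_coe, exists_prop] at ha
          obtain ⟨j, hj, haj⟩ := ha
          rcases Finset.mem_union.mp hj with hj | hj
          · exact Or.inl (Or.inr (Set.mem_biUnion hj haj))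
          · exact Or.inr (Or.inr (Set.mem_biUnion hj haj))
      have hsub2 : ⋃ j ∈ X₀ ∩ Y₀, (S j : Set α) ⊆ A ∩ B := by
        intro a ha
        simp only [Set.mem_iUnion, Finset.mem_coe, exists_prop] at ha
        obtain ⟨j, hj, haj⟩ := ha
        exact ⟨Or.inr (Set.mem_biUnion (Finset.mem_inter.mp hj).1 haj),
          Or.inr (Set.mem_biUnion (Finset.mem_inter.mp hj).2 haj)⟩
      have hiXY : i ∉ X₀ ∪ Y₀ := by
        simp only [Finset.mem_union]
        rintro (h | h)
        exacts [hiX₀ h, hiY₀ h]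
      have hr1 : ((X₀ ∪ Y₀).card + 1 : ℕ∞) ≤ M.rankFn (A ∪ B) := by
        have h := hcond (insert i (X₀ ∪ Y₀))
        rw [Finset.card_insert_of_notMem hiXY] at h
        push_cast at h
        exact h.trans (rankFn_mono hsub1)
      have hr2 : ((X₀ ∩ Y₀).card : ℕ∞) ≤ M.rankFn (A ∩ B) :=
        (hcond (X₀ ∩ Y₀)).trans (rankFn_mono hsub2)
      have hfinal := (add_le_add hr1 hr2).trans ((rankFn_submod A B).trans
        (add_le_add hX₀ hY₀))
      have hnat : (X₀ ∪ Y₀).card + 1 + (X₀ ∩ Y₀).card ≤ X₀.card + Y₀.card := by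
        exact_mod_cast hfinal
      have hcards := Finset.card_union_add_card_inter X₀ Y₀
      omega
    -- the sum decreases for each update
    have hsum' : ∀ (z : α), z ∈ S i →
        (∑ j, ((Function.update S i ((S i).erase z)) j).card) ≤ N := by
      intro z hz
      set S' := Function.update S i ((S i).erase z) with hS'
      have e1 : ∑ j, (S' j).card = (S' i).card + ∑ j ∈ Finset.univ.erase i, (S' j).card :=
        (Finset.add_sum_erase _ _ (Finset.mem_univ i)).symm
      have e2 : ∑ j ∈ Finset.univ.erase i, (S' j).card
          = ∑ j ∈ Finset.univ.erase i, (S j).card :=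
        Finset.sum_congr rfl fun j hj => by
          rw [hS', Function.update_of_ne (Finset.ne_of_mem_erase hj)]
      have e3 : (S' i).card = (S i).card - 1 := by
        rw [hS', Function.update_self]
        exact Finset.card_erase_of_mem hz
      have h1 : (S i).card + ∑ j ∈ Finset.univ.erase i, (S j).card ≤ N + 1 :=
        le_trans (le_of_eq (Finset.add_sum_erase _ (fun j => (S j).card)
          (Finset.mem_univ i))) hsum
      omega
    rcases hkey with h | h
    · obtain ⟨e, h1, h2, h3⟩ := IH S₁ (hsum' x hx) h
      refine ⟨e, h1, fun j => ?_, h3⟩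
      have hj := h2 j
      by_cases hji : j = i
      · subst hji
        rw [hS₁def, Function.update_self] at hj
        exact (Finset.erase_subset x (S j)) hj
      · rwa [hS₁def, Function.update_of_ne hji] at hj
    · obtain ⟨e, h1, h2, h3⟩ := IH S₂ (hsum' y hy) h
      refine ⟨e, h1, fun j => ?_, h3⟩
      have hj := h2 j
      by_cases hji : j = i
      · subst hji
        rw [hS₂def, Function.update_self] at hj
        exact (Finset.erase_subset y (S j)) hj
      · rwa [hS₂def, Function.update_of_ne hji] at hj

end RadoAux

/-- Rado's theorem: if `M` is a rank-`n` matroid and `S 1, …, S n` are sets of elements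
of `M`, then there is a basis of `M` of the form `{e 1, …, e n}` with the `e i` pairwise
distinct and `e i ∈ S i` for each `i` (a transversal basis of `(S 1, …, S n)`) if and only
if `r(⋃_{i ∈ X} S i) ≥ |X|` for every `X ⊆ {1, …, n}`. -/
theorem rado {α : Type*} (n : ℕ) (M : Matroid α) (hrank : M.rankFn M.E = (n : ℕ∞))
    (S : Fin n → Set α) :
    (∃ e : Fin n → α, Function.Injective e ∧ (∀ i, e i ∈ S i) ∧ M.IsBase (Set.range e)) ↔
      ∀ X : Finset (Fin n), (X.card : ℕ∞) ≤ M.rankFn (⋃ i ∈ X, S i) := by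
  constructor
  · rintro ⟨e, hinj, hmem, hbase⟩ X
    have h1 : M.Indep (e '' ↑X) :=
      hbase.indep.subset (by rintro _ ⟨i, _, rfl⟩; exact Set.mem_range_self i)
    have h2 : (e '' ↑X : Set α) ⊆ ⋃ i ∈ X, S i := by
      rintro _ ⟨i, hi, rfl⟩
      exact Set.mem_biUnion hi (hmem i)
    have h3 : (e '' ↑X).encard = (X.card : ℕ∞) := by
      rw [Set.InjOn.encard_image (hinj.injOn), Set.encard_coe_eq_coe_finsetCard]
    exact h3 ▸ RadoAux.le_rankFn _ _ h1 h2
  · intro hcond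
    choose c hc1 hc2 hc3 using fun X => RadoAux.exists_indep_of_le_rankFn (hcond X)
    set U : Set α := ⋃ X : Finset (Fin n), c X with hUdef
    have hUfin : U.Finite :=
      Set.finite_iUnion fun X => Set.finite_of_encard_eq_coe (hc3 X)
    have hTfin : ∀ i, (S i ∩ U).Finite := fun i => hUfin.inter_of_right (S i)
    let T : Fin n → Finset α := fun i => (hTfin i).toFinset
    have hTcoe : ∀ i, (T i : Set α) = S i ∩ U := fun i => (hTfin i).coe_toFinset
    have hcond' : ∀ X : Finset (Fin n), (X.card : ℕ∞) ≤ M.rankFn (⋃ i ∈ X, (T i : Set α)) := by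
      intro X
      rw [← hc3 X]
      refine RadoAux.le_rankFn _ _ (hc1 X) ?_
      intro a ha
      have haU : a ∈ U := Set.mem_iUnion.mpr ⟨X, ha⟩
      have haS := hc2 X ha
      simp only [Set.mem_iUnion, exists_prop] at haS ⊢
      obtain ⟨i, hiX, hai⟩ := haS
      exact ⟨i, hiX, by rw [hTcoe]; exact ⟨hai, haU⟩⟩
    obtain ⟨e, h1, h2, h3⟩ := RadoAux.rado_finset n M hrank (∑ i, (T i).card) T le_rfl hcond'
    refine ⟨e, h1, fun i => ?_, h3⟩
    have := h2 i
    rw [hTcoe] at this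
    exact this.1
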